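/- arXiv:1510.09025 — 3 statements merged into one kernel-verified Lean document; each statement's English description precedes it below -/
import Mathlib

section
/- If c_s > 0 and c_ℓ > 0, then in any stable network all speaking and listening edges are complete; that is, s_{vw} ∈ E_s implies ℓ_{wv} ∈ E_ℓ, and ℓ_{vw} ∈ E_ℓ implies s_{wv} ∈ E_s. -/
/-- A bidirected network: speaking edges `Es` and listening edges `El`. -/
structure BiNet (V : Type*) where
  Es : V → V → Prop
  El : V → V → Prop

variable {V : Type*} [Fintype V] [DecidableEq V]

/-- A speaking step from `a` to `b`: the speaking edge `s_{ab}` matched by `ℓ_{ba}`. -/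
def sStep (G : BiNet V) (a b : V) : Prop := G.Es a b ∧ G.El b a

/-- A listening step from `a` to `b`: the listening edge `ℓ_{ab}` matched by `s_{ba}`. -/
def lStep (G : BiNet V) (a b : V) : Prop := G.El a b ∧ G.Es b a

/-- Path of length at most `k` for the step relation. -/
def within {W : Type*} (step : W → W → Prop) : ℕ → W → W → Prop
  | 0, a, b => a = b
  | m+1, a, b => a = b ∨ ∃ w, step a w ∧ within step m w b

/-- The `k`-speaking-reachable set of `v` (excluding `v`). -/
def Rs (G : BiNet V) (k : ℕ) (v : V) : Set V := {w | w ≠ v ∧ within (sStep G) k v w}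

/-- The `k`-listening-reachable set of `v` (excluding `v`). -/
def Rl (G : BiNet V) (k : ℕ) (v : V) : Set V := {w | w ≠ v ∧ within (lStep G) k v w}

/-- Speaking out-degree. -/
noncomputable def dsOut (G : BiNet V) (v : V) : ℕ := {w | G.Es v w}.ncard

/-- Listening out-degree. -/
noncomputable def dlOut (G : BiNet V) (v : V) : ℕ := {w | G.El v w}.ncard

/-- Utility of agent `v`. -/
noncomputable def util (G : BiNet V) (k : ℕ) (cs cl : ℝ) (v : V) : ℝ :=
  (((Rs G k v).ncard : ℝ) - cs * (dsOut G v : ℝ)) +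
    (((Rl G k v).ncard : ℝ) - cl * (dlOut G v : ℝ))

/-- Add the speaking edge `s_{uv}`. -/
def addS (G : BiNet V) (u v : V) : BiNet V :=
  ⟨fun a b => G.Es a b ∨ (a = u ∧ b = v), G.El⟩

/-- Delete the speaking edge `s_{uv}`. -/
def delS (G : BiNet V) (u v : V) : BiNet V :=
  ⟨fun a b => G.Es a b ∧ ¬(a = u ∧ b = v), G.El⟩

/-- Add the listening edge `ℓ_{uv}`. -/
def addL (G : BiNet V) (u v : V) : BiNet V :=
  ⟨G.Es, fun a b => G.El a b ∨ (a = u ∧ b = v)⟩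

/-- Delete the listening edge `ℓ_{uv}`. -/
def delL (G : BiNet V) (u v : V) : BiNet V :=
  ⟨G.Es, fun a b => G.El a b ∧ ¬(a = u ∧ b = v)⟩

/-- Unilateral deviation: `v` replaces its speaking/listening out-edges by `Ss`/`Sl`. -/
def deviate (G : BiNet V) (v : V) (Ss Sl : V → Prop) : BiNet V :=
  ⟨fun a b => if a = v then Ss b else G.Es a b,
   fun a b => if a = v then Sl b else G.El a b⟩

/-- Stability: no unilateral deviation strictly improves an agent's utility. -/
def Stable (G : BiNet V) (k : ℕ) (cs cl : ℝ) : Prop :=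
  ∀ v Ss Sl, util (deviate G v Ss Sl) k cs cl v ≤ util G k cs cl v

/-- Bidirected pairwise stability. -/
def BiPairwiseStable (G : BiNet V) (k : ℕ) (cs cl : ℝ) : Prop :=
  (∀ u v, G.Es u v → util (delS G u v) k cs cl u ≤ util G k cs cl u) ∧
  (∀ u v, G.El u v → util (delL G u v) k cs cl u ≤ util G k cs cl u) ∧
  (∀ u v, util G k cs cl u < util (addL (addS G u v) v u) k cs cl u →
      util (addL (addS G u v) v u) k cs cl v < util G k cs cl v)

/-- If `c_s > 0` and `c_ℓ > 0`, then in any stable network all edges are complete: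
`s_{vw} ∈ E_s → ℓ_{wv} ∈ E_ℓ` and `ℓ_{vw} ∈ E_ℓ → s_{wv} ∈ E_s`. -/
theorem stmt1 (G : BiNet V) (k : ℕ) (cs cl : ℝ)
    (hcs : 0 < cs) (hcl : 0 < cl) (hstable : Stable G k cs cl) :
    ∀ v w, (G.Es v w → G.El w v) ∧ (G.El v w → G.Es w v) := by
  intro v w
  constructor
  · intro hEs
    by_contra hEl
    set Ss : V → Prop := fun b => G.Es v b ∧ b ≠ w with hSs
    set Sl : V → Prop := fun b => G.El v b with hSl
    set G' := deviate G v Ss Sl with hG'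
    have hEl' : ∀ a b, G'.El a b ↔ G.El a b := by
      intro a b
      by_cases ha : a = v <;> simp [hG', deviate, hSl, ha]
    have hEsv : ∀ b, G'.Es v b ↔ (G.Es v b ∧ b ≠ w) := by
      intro b; simp [hG', deviate, hSs]
    have hEsa : ∀ a b, a ≠ v → (G'.Es a b ↔ G.Es a b) := by
      intro a b ha; simp [hG', deviate, ha]
    have hstepS : sStep G' = sStep G := by
      funext a b
      apply propext
      simp only [sStep, hEl']
      by_cases ha : a = v
      · subst ha
        rw [hEsv]
        constructor
        · rintro ⟨⟨h1, _⟩, h2⟩; exact ⟨h1, h2⟩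
        · rintro ⟨h1, h2⟩
          exact ⟨⟨h1, fun hbw => hEl (hbw ▸ h2)⟩, h2⟩
      · rw [hEsa a b ha]
    have hstepL : lStep G' = lStep G := by
      funext a b
      apply propext
      simp only [lStep, hEl']
      by_cases hb : b = v
      · subst hb
        rw [hEsv]
        constructor
        · rintro ⟨h1, h2, _⟩; exact ⟨h1, h2⟩
        · rintro ⟨h1, h2⟩
          exact ⟨h1, h2, fun haw => hEl (haw ▸ h1)⟩
      · rw [hEsa b a hb]
    have hRs : Rs G' k v = Rs G k v := by simp only [Rs, hstepS]
    have hRl : Rl G' k v = Rl G k v := by simp only [Rl, hstepL]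
    have hdl : dlOut G' v = dlOut G v := by
      simp only [dlOut]
      congr 1
      ext b
      exact hEl' v b
    have hds : dsOut G' v < dsOut G v := by
      simp only [dsOut]
      apply Set.ncard_lt_ncard
      · constructor
        · intro b hb
          have := (hEsv b).mp hb
          exact this.1
        · intro hsub
          have hw : w ∈ {b | G.Es v b} := hEs
          have := (hEsv w).mp (hsub hw)
          exact this.2 rfl
      · exact Set.toFinite _
    have hutil : util G k cs cl v < util G' k cs cl v := by
      simp only [util, hRs, hRl, hdl]
      have : cs * (dsOut G' v : ℝ) < cs * (dsOut G v : ℝ) :=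
        mul_lt_mul_of_pos_left (Nat.cast_lt.mpr hds) hcs
      linarith
    exact absurd (hstable v Ss Sl) (not_le.mpr hutil)
  · intro hEl
    by_contra hEs
    set Ss : V → Prop := fun b => G.Es v b with hSs
    set Sl : V → Prop := fun b => G.El v b ∧ b ≠ w with hSl
    set G' := deviate G v Ss Sl with hG'
    have hEs' : ∀ a b, G'.Es a b ↔ G.Es a b := by
      intro a b
      by_cases ha : a = v <;> simp [hG', deviate, hSs, ha]
    have hElv : ∀ b, G'.El v b ↔ (G.El v b ∧ b ≠ w) := by
      intro b; simp [hG', deviate, hSl]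
    have hEla : ∀ a b, a ≠ v → (G'.El a b ↔ G.El a b) := by
      intro a b ha; simp [hG', deviate, ha]
    have hstepS : sStep G' = sStep G := by
      funext a b
      apply propext
      simp only [sStep, hEs']
      by_cases hb : b = v
      · subst hb
        rw [hElv]
        constructor
        · rintro ⟨h1, h2, _⟩; exact ⟨h1, h2⟩
        · rintro ⟨h1, h2⟩
          exact ⟨h1, h2, fun haw => hEs (haw ▸ h1)⟩
      · rw [hEla b a hb]
    have hstepL : lStep G' = lStep G := by
      funext a b
      apply propext
      simp only [lStep, hEs']
      by_cases ha : a = v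
      · subst ha
        rw [hElv]
        constructor
        · rintro ⟨⟨h1, _⟩, h2⟩; exact ⟨h1, h2⟩
        · rintro ⟨h1, h2⟩
          exact ⟨⟨h1, fun hbw => hEs (hbw ▸ h2)⟩, h2⟩
      · rw [hEla a b ha]
    have hRs : Rs G' k v = Rs G k v := by simp only [Rs, hstepS]
    have hRl : Rl G' k v = Rl G k v := by simp only [Rl, hstepL]
    have hds : dsOut G' v = dsOut G v := by
      simp only [dsOut]
      congr 1
      ext b
      exact hEs' v b
    have hdl : dlOut G' v < dlOut G v := by
      simp only [dlOut]
      apply Set.ncard_lt_ncard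
      · constructor
        · intro b hb
          have := (hElv b).mp hb
          exact this.1
        · intro hsub
          have hw : w ∈ {b | G.El v b} := hEl
          have := (hElv w).mp (hsub hw)
          exact this.2 rfl
      · exact Set.toFinite _
    have hutil : util G k cs cl v < util G' k cs cl v := by
      simp only [util, hRs, hRl, hds]
      have : cl * (dlOut G' v : ℝ) < cl * (dlOut G v : ℝ) :=
        mul_lt_mul_of_pos_left (Nat.cast_lt.mpr hdl) hcl
      linarith
    exact absurd (hstable v Ss Sl) (not_le.mpr hutil)
end

section
/- If c_s > 0 and c_ℓ > 0, then in any efficient network (one maximizing the sum of agents' utilities) all speaking and listening edges are complete. -/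
variable {V : Type*} [Fintype V] [DecidableEq V]

/-- Social welfare: the sum of all agents' utilities. -/
noncomputable def welfare (G : BiNet V) (k : ℕ) (cs cl : ℝ) : ℝ :=
  ∑ v : V, util G k cs cl v


section Aux
variable {V : Type*} [Fintype V] [DecidableEq V]

lemma sStep_delS (G : BiNet V) (v w : V) (h : ¬ G.El w v) :
    sStep (delS G v w) = sStep G := by
  funext a b; apply propext
  unfold sStep delS
  constructor
  · rintro ⟨⟨h1, _⟩, h2⟩; exact ⟨h1, h2⟩
  · rintro ⟨h1, h2⟩
    refine ⟨⟨h1, ?_⟩, h2⟩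
    rintro ⟨rfl, rfl⟩; exact h h2

lemma lStep_delS (G : BiNet V) (v w : V) (h : ¬ G.El w v) :
    lStep (delS G v w) = lStep G := by
  funext a b; apply propext
  unfold lStep delS
  constructor
  · rintro ⟨h1, h2, _⟩; exact ⟨h1, h2⟩
  · rintro ⟨h1, h2⟩
    refine ⟨h1, h2, ?_⟩
    rintro ⟨rfl, rfl⟩; exact h h1

lemma sStep_delL (G : BiNet V) (v w : V) (h : ¬ G.Es w v) :
    sStep (delL G v w) = sStep G := by
  funext a b; apply propext
  unfold sStep delL
  constructor
  · rintro ⟨h1, h2, _⟩; exact ⟨h1, h2⟩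
  · rintro ⟨h1, h2⟩
    refine ⟨h1, h2, ?_⟩
    rintro ⟨rfl, rfl⟩; exact h h1

lemma lStep_delL (G : BiNet V) (v w : V) (h : ¬ G.Es w v) :
    lStep (delL G v w) = lStep G := by
  funext a b; apply propext
  unfold lStep delL
  constructor
  · rintro ⟨⟨h1, _⟩, h2⟩; exact ⟨h1, h2⟩
  · rintro ⟨h1, h2⟩
    refine ⟨⟨h1, ?_⟩, h2⟩
    rintro ⟨rfl, rfl⟩; exact h h2

lemma dsOut_delS_self (G : BiNet V) (v w : V) (hE : G.Es v w) :
    dsOut (delS G v w) v + 1 = dsOut G v := by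
  unfold dsOut delS
  have hset : {b | G.Es v b ∧ ¬(v = v ∧ b = w)} = {b | G.Es v b} \ {w} := by
    ext b; simp [and_comm]
  rw [hset]
  exact Set.ncard_diff_singleton_add_one hE (Set.toFinite _)

lemma dsOut_delS_ne (G : BiNet V) (v w u : V) (hu : u ≠ v) :
    dsOut (delS G v w) u = dsOut G u := by
  unfold dsOut delS
  congr 1
  ext b; simp only [Set.mem_setOf_eq]
  constructor
  · rintro ⟨h1, _⟩; exact h1
  · intro h1; exact ⟨h1, fun h2 => hu h2.1⟩

lemma dlOut_delL_self (G : BiNet V) (v w : V) (hE : G.El v w) :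
    dlOut (delL G v w) v + 1 = dlOut G v := by
  unfold dlOut delL
  have hset : {b | G.El v b ∧ ¬(v = v ∧ b = w)} = {b | G.El v b} \ {w} := by
    ext b; simp [and_comm]
  rw [hset]
  exact Set.ncard_diff_singleton_add_one hE (Set.toFinite _)

lemma dlOut_delL_ne (G : BiNet V) (v w u : V) (hu : u ≠ v) :
    dlOut (delL G v w) u = dlOut G u := by
  unfold dlOut delL
  congr 1
  ext b; simp only [Set.mem_setOf_eq]
  constructor
  · rintro ⟨h1, _⟩; exact h1
  · intro h1; exact ⟨h1, fun h2 => hu h2.1⟩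

lemma util_delS (G : BiNet V) (k : ℕ) (cs cl : ℝ) (v w : V)
    (hE : G.Es v w) (h : ¬ G.El w v) (u : V) :
    util (delS G v w) k cs cl u = util G k cs cl u + (if u = v then cs else 0) := by
  have hRs : Rs (delS G v w) k u = Rs G k u := by
    unfold Rs; rw [sStep_delS G v w h]
  have hRl : Rl (delS G v w) k u = Rl G k u := by
    unfold Rl; rw [lStep_delS G v w h]
  have hdl : dlOut (delS G v w) u = dlOut G u := rfl
  by_cases hu : u = v
  · subst hu
    have hds := dsOut_delS_self G u w hE
    unfold util
    rw [hRs, hRl, hdl, if_pos rfl]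
    have : (dsOut G u : ℝ) = (dsOut (delS G u w) u : ℝ) + 1 := by
      rw [← hds]; push_cast; ring
    rw [this]; ring
  · have hds := dsOut_delS_ne G v w u hu
    unfold util
    rw [hRs, hRl, hdl, hds, if_neg hu]; ring

lemma util_delL (G : BiNet V) (k : ℕ) (cs cl : ℝ) (v w : V)
    (hE : G.El v w) (h : ¬ G.Es w v) (u : V) :
    util (delL G v w) k cs cl u = util G k cs cl u + (if u = v then cl else 0) := by
  have hRs : Rs (delL G v w) k u = Rs G k u := by
    unfold Rs; rw [sStep_delL G v w h]
  have hRl : Rl (delL G v w) k u = Rl G k u := by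
    unfold Rl; rw [lStep_delL G v w h]
  have hds : dsOut (delL G v w) u = dsOut G u := rfl
  by_cases hu : u = v
  · subst hu
    have hdl := dlOut_delL_self G u w hE
    unfold util
    rw [hRs, hRl, hds, if_pos rfl]
    have : (dlOut G u : ℝ) = (dlOut (delL G u w) u : ℝ) + 1 := by
      rw [← hdl]; push_cast; ring
    rw [this]; ring
  · have hdl := dlOut_delL_ne G v w u hu
    unfold util
    rw [hRs, hRl, hds, hdl, if_neg hu]; ring

end Aux

/-- If `c_s > 0` and `c_ℓ > 0`, then in any efficient network (one maximizing the sum of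
agents' utilities) all speaking and listening edges are complete. -/
theorem stmt2 (G : BiNet V) (k : ℕ) (cs cl : ℝ)
    (hcs : 0 < cs) (hcl : 0 < cl)
    (heff : ∀ G' : BiNet V, welfare G' k cs cl ≤ welfare G k cs cl) :
    ∀ v w, (G.Es v w → G.El w v) ∧ (G.El v w → G.Es w v) := by
  intro v w
  constructor
  · intro hE
    by_contra h
    have hw : welfare (delS G v w) k cs cl = welfare G k cs cl + cs := by
      unfold welfare
      simp only [util_delS G k cs cl v w hE h]
      rw [Finset.sum_add_distrib, Finset.sum_ite_eq' Finset.univ v (fun _ => cs)]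
      simp
    have := heff (delS G v w)
    rw [hw] at this
    linarith
  · intro hE
    by_contra h
    have hw : welfare (delL G v w) k cs cl = welfare G k cs cl + cl := by
      unfold welfare
      simp only [util_delL G k cs cl v w hE h]
      rw [Finset.sum_add_distrib, Finset.sum_ite_eq' Finset.univ v (fun _ => cl)]
      simp
    have := heff (delL G v w)
    rw [hw] at this
    linarith
end

section
/- For k = ∞ and 0 ≤ c_s ≤ n-1, 0 ≤ c_ℓ ≤ n-1 (with strict positivity where needed for completeness arguments), the bidirected n-cycle is pairwise stable. -/
open Relation

variable {V : Type*} [Fintype V] [DecidableEq V]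

/-- The speaking-reachable set of `v` for k = ∞ (excluding `v`). -/
def RsInf (G : BiNet V) (v : V) : Set V := {w | w ≠ v ∧ ReflTransGen (sStep G) v w}

/-- The listening-reachable set of `v` for k = ∞ (excluding `v`). -/
def RlInf (G : BiNet V) (v : V) : Set V := {w | w ≠ v ∧ ReflTransGen (lStep G) v w}

/-- Utility of agent `v` (k = ∞). -/
noncomputable def utilInf (G : BiNet V) (cs cl : ℝ) (v : V) : ℝ :=
  (((RsInf G v).ncard : ℝ) - cs * (dsOut G v : ℝ)) +
    (((RlInf G v).ncard : ℝ) - cl * (dlOut G v : ℝ))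

/-- Social welfare (k = ∞). -/
noncomputable def welfareInf (G : BiNet V) (cs cl : ℝ) : ℝ :=
  ∑ v : V, utilInf G cs cl v

/-- `G` is a bidirected cycle: speaking edges form a directed Hamiltonian cycle and the
listening edges are exactly their reverses. -/
def IsBiCycle (G : BiNet V) : Prop :=
  ∃ e : V ≃ Fin (Fintype.card V),
    (∀ u v, G.Es u v ↔ (e v).val = ((e u).val + 1) % Fintype.card V) ∧
    (∀ u v, G.El u v ↔ (e u).val = ((e v).val + 1) % Fintype.card V)

/-- Bidirected pairwise stability (k = ∞). -/
def BiPairwiseStableInf (G : BiNet V) (cs cl : ℝ) : Prop :=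
  (∀ u v, G.Es u v → utilInf (delS G u v) cs cl u ≤ utilInf G cs cl u) ∧
  (∀ u v, G.El u v → utilInf (delL G u v) cs cl u ≤ utilInf G cs cl u) ∧
  (∀ u v, utilInf G cs cl u < utilInf (addL (addS G u v) v u) cs cl u →
      utilInf (addL (addS G u v) v u) cs cl v < utilInf G cs cl v)

set_option linter.unusedSectionVars false in
open Fin.NatCast Fin.CommRing in
private lemma reach_avoid {n : ℕ} [NeZero n] (f : V ≃ Fin n) (r : V → V → Prop) (u : V)
    (h : ∀ a b, f b = f a + 1 → b ≠ u → r a b) (w : V) :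
    Relation.ReflTransGen r u w := by
  have key : ∀ k, k < n → Relation.ReflTransGen r u (f.symm (f u + (k : Fin n))) := by
    intro k
    induction k with
    | zero => intro _; simpa using Relation.ReflTransGen.refl
    | succ k ih =>
      intro hk
      have hne : ((k+1 : ℕ) : Fin n) ≠ 0 := by
        have hv : ((k+1 : ℕ) : Fin n).val = k+1 := by
          rw [Fin.val_natCast]; exact Nat.mod_eq_of_lt hk
        intro h0; rw [h0] at hv; simp at hv
      refine (ih (by omega)).tail (h _ _ ?_ ?_)
      · rw [Equiv.apply_symm_apply, Equiv.apply_symm_apply]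
        push_cast
        ring
      · intro hEq
        apply hne
        have h1 := congrArg f hEq
        rw [Equiv.apply_symm_apply] at h1
        have h2 : f u + ((k+1:ℕ) : Fin n) = f u + 0 := by rw [h1, add_zero]
        exact add_left_cancel h2
  have hk := (f w - f u).isLt
  have hres := key (f w - f u).val hk
  have he : f u + (f w - f u) = f w := by ring
  rwa [Fin.cast_val_eq_self, he, Equiv.symm_apply_apply] at hres

private lemma compl_ncard (v : V) : ({w | w ≠ v} : Set V).ncard = Fintype.card V - 1 := by
  have : ({w | w ≠ v} : Set V) = ↑(({v} : Finset V)ᶜ) := by ext w; simp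
  rw [this, Set.ncard_coe_finset, Finset.card_compl, Finset.card_singleton]


open Fin.CommRing in
/-- For k = ∞ and `0 ≤ c_s ≤ n - 1`, `0 ≤ c_ℓ ≤ n - 1`, the bidirected n-cycle is
pairwise stable. -/
theorem stmt14 (G : BiNet V) (cs cl : ℝ) (hn : 2 ≤ Fintype.card V)
    (hcs : 0 ≤ cs) (hcs' : cs ≤ (Fintype.card V : ℝ) - 1)
    (hcl : 0 ≤ cl) (hcl' : cl ≤ (Fintype.card V : ℝ) - 1)
    (hG : IsBiCycle G) :
    BiPairwiseStableInf G cs cl := by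
  classical
  obtain ⟨e, hEs, hEl⟩ := hG
  haveI : NeZero (Fintype.card V) := ⟨by omega⟩
  have hcast : ((Fintype.card V - 1 : ℕ) : ℝ) = (Fintype.card V : ℝ) - 1 := by
    rw [Nat.cast_sub (by omega)]; simp
  have hadd : ∀ x y : Fin (Fintype.card V),
      y = x + 1 ↔ y.val = (x.val + 1) % Fintype.card V := by
    intro x y
    rw [Fin.ext_iff, Fin.add_def, Fin.val_one',
      Nat.mod_eq_of_lt (by omega : 1 < Fintype.card V)]
  have hEs' : ∀ a b, G.Es a b ↔ e b = e a + 1 := by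
    intro a b; rw [hEs, hadd]
  have hEl' : ∀ a b, G.El a b ↔ e a = e b + 1 := by
    intro a b; rw [hEl, hadd]
  set g : V ≃ Fin (Fintype.card V) := e.trans (Equiv.neg (Fin (Fintype.card V))) with hgdef
  have hg : ∀ x, g x = -(e x) := fun x => rfl
  have hgiff : ∀ a b : V, e a = e b + 1 ↔ g b = g a + 1 := by
    intro a b
    rw [hg, hg]
    constructor
    · intro h; rw [h]; ring
    · intro h
      have := congrArg Neg.neg h
      simp only [neg_neg, neg_add_rev] at this
      rw [this]; ring
  have hS : ∀ a b, sStep G a b ↔ e b = e a + 1 := by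
    intro a b; unfold sStep; rw [hEs' a b, hEl' b a]; tauto
  have hL : ∀ a b, lStep G a b ↔ g b = g a + 1 := by
    intro a b; unfold lStep; rw [hEl' a b, hEs' b a, hgiff]; tauto
  have hRs : ∀ v, RsInf G v = {w | w ≠ v} := by
    intro v; ext w
    simp only [RsInf, Set.mem_setOf_eq, and_iff_left_iff_imp]
    intro _
    exact reach_avoid e (sStep G) v (fun a b hab _ => (hS a b).2 hab) w
  have hRl : ∀ v, RlInf G v = {w | w ≠ v} := by
    intro v; ext w
    simp only [RlInf, Set.mem_setOf_eq, and_iff_left_iff_imp]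
    intro _
    exact reach_avoid g (lStep G) v (fun a b hab _ => (hL a b).2 hab) w
  have hds : ∀ v, dsOut G v = 1 := by
    intro v
    have h : {w | G.Es v w} = {e.symm (e v + 1)} := by
      ext w
      simp only [Set.mem_setOf_eq, Set.mem_singleton_iff, hEs' v w, Equiv.eq_symm_apply]
    rw [dsOut, h, Set.ncard_singleton]
  have hdl : ∀ v, dlOut G v = 1 := by
    intro v
    have h : {w | G.El v w} = {g.symm (g v + 1)} := by
      ext w
      simp only [Set.mem_setOf_eq, Set.mem_singleton_iff, hEl' v w, hgiff,
        Equiv.eq_symm_apply]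
    rw [dlOut, h, Set.ncard_singleton]
  refine ⟨?_, ?_, ?_⟩
  · -- deleting a speaking edge
    intro u v huv
    have hv : e v = e u + 1 := (hEs' u v).1 huv
    have h1 : RsInf (delS G u v) u = ∅ := by
      ext w
      simp only [RsInf, Set.mem_setOf_eq, Set.mem_empty_iff_false, iff_false, not_and]
      intro hw hreach
      rcases hreach.cases_head with h | ⟨c, hc, _⟩
      · exact hw h.symm
      · rcases hc with ⟨⟨hce, hcne⟩, -⟩
        exact hcne ⟨rfl, e.injective (by rw [(hEs' u c).1 hce, hv])⟩
    have h2 : {w | (delS G u v).Es u w} = ∅ := by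
      ext w
      simp only [Set.mem_setOf_eq, Set.mem_empty_iff_false, iff_false]
      rintro ⟨hce, hcne⟩
      exact hcne ⟨rfl, e.injective (by rw [(hEs' u w).1 hce, hv])⟩
    have h3 : RlInf (delS G u v) u = {w | w ≠ u} := by
      ext w
      simp only [RlInf, Set.mem_setOf_eq, and_iff_left_iff_imp]
      intro _
      refine reach_avoid g (lStep (delS G u v)) u (fun a b hab hbu => ?_) w
      have hl := (hL a b).2 hab
      exact ⟨hl.1, hl.2, fun hc => hbu hc.1⟩
    have h4 : dlOut (delS G u v) u = dlOut G u := rfl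
    rw [utilInf, utilInf, h1, h3, h4, hdl, hds]
    rw [show dsOut (delS G u v) u = 0 by rw [dsOut, h2, Set.ncard_empty]]
    simp only [hRs, hRl, compl_ncard, Set.ncard_empty, hcast]
    push_cast
    linarith
  · -- deleting a listening edge
    intro u v huv
    have hv : e u = e v + 1 := (hEl' u v).1 huv
    have hcv : ∀ c, G.El u c → c = v := by
      intro c hce
      refine e.injective ?_
      have h5 := (hEl' u c).1 hce
      exact add_left_injective 1 (hv.symm.trans h5) |>.symm ▸ rfl
    have h1 : RlInf (delL G u v) u = ∅ := by
      ext w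
      simp only [RlInf, Set.mem_setOf_eq, Set.mem_empty_iff_false, iff_false, not_and]
      intro hw hreach
      rcases hreach.cases_head with h | ⟨c, hc, _⟩
      · exact hw h.symm
      · rcases hc with ⟨⟨hce, hcne⟩, -⟩
        exact hcne ⟨rfl, e.injective (add_left_injective 1 (((hEl' u c).1 hce).symm.trans hv))⟩
    have h2 : {w | (delL G u v).El u w} = ∅ := by
      ext w
      simp only [Set.mem_setOf_eq, Set.mem_empty_iff_false, iff_false]
      rintro ⟨hce, hcne⟩
      exact hcne ⟨rfl, e.injective (add_left_injective 1 (((hEl' u w).1 hce).symm.trans hv))⟩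
    have h3 : RsInf (delL G u v) u = {w | w ≠ u} := by
      ext w
      simp only [RsInf, Set.mem_setOf_eq, and_iff_left_iff_imp]
      intro _
      refine reach_avoid e (sStep (delL G u v)) u (fun a b hab hbu => ?_) w
      have hl := (hS a b).2 hab
      exact ⟨hl.1, hl.2, fun hc => hbu hc.1⟩
    have h4 : dsOut (delL G u v) u = dsOut G u := rfl
    rw [utilInf, utilInf, h1, h3, h4, hds, hdl]
    rw [show dlOut (delL G u v) u = 0 by rw [dlOut, h2, Set.ncard_empty]]
    simp only [hRs, hRl, compl_ncard, Set.ncard_empty, hcast]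
    push_cast
    linarith
  · -- adding a pair of edges never strictly helps u
    intro u v hlt
    exfalso
    set G' := addL (addS G u v) v u with hG'
    have hA : ((RsInf G' u).ncard : ℝ) ≤ ((RsInf G u).ncard : ℝ) := by
      rw [hRs, compl_ncard]
      have hsub : RsInf G' u ⊆ {w | w ≠ u} := fun w hw => hw.1
      have h := Set.ncard_le_ncard hsub (Set.toFinite _)
      rw [compl_ncard] at h
      exact_mod_cast h
    have hB : ((RlInf G' u).ncard : ℝ) ≤ ((RlInf G u).ncard : ℝ) := by
      rw [hRl, compl_ncard]
      have hsub : RlInf G' u ⊆ {w | w ≠ u} := fun w hw => hw.1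
      have h := Set.ncard_le_ncard hsub (Set.toFinite _)
      rw [compl_ncard] at h
      exact_mod_cast h
    have hC : (dsOut G u : ℝ) ≤ (dsOut G' u : ℝ) := by
      have hsub : {w | G.Es u w} ⊆ {w | G'.Es u w} := fun w hw => Or.inl hw
      exact_mod_cast Set.ncard_le_ncard hsub (Set.toFinite _)
    have hD : (dlOut G u : ℝ) ≤ (dlOut G' u : ℝ) := by
      have hsub : {w | G.El u w} ⊆ {w | G'.El u w} := fun w hw => Or.inl hw
      exact_mod_cast Set.ncard_le_ncard hsub (Set.toFinite _)
    have hcsm := mul_le_mul_of_nonneg_left hC hcs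
    have hclm := mul_le_mul_of_nonneg_left hD hcl
    rw [utilInf, utilInf] at hlt
    linarith
end
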